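/- Let p(x,y,t) be a nonzero homogeneous real polynomial with at most 3 distinct monomials whose monomials have no common monomial factor, such that p(x,y,t) = 0 whenever x + y + t = 0. Then p is a nonzero constant multiple of x + y + t. -/

import Mathlib

open MvPolynomial

lemma stmt_4_degree_single (i : Fin 3) (n : ℕ) : (Finsupp.single i n).degree = n := by
  rcases eq_or_ne n 0 with rfl | h
  · simp [Finsupp.degree]
  · rw [Finsupp.degree_apply, Finsupp.support_single_ne_zero _ h, Finset.sum_singleton,
      Finsupp.single_eq_same]

/-- Helper: if `p` vanishes at a point `v` with `v i = 0` and other coordinates `±1`,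
and some support monomial has exponent `0` at `i`, then at least two do. -/
lemma stmt_4_aux (p : MvPolynomial (Fin 3) ℝ) (i : Fin 3) (v : Fin 3 → ℝ)
    (hvi : v i = 0) (hv : ∀ j, j ≠ i → v j = 1 ∨ v j = -1)
    (hval : eval v p = 0)
    (hne : ∃ m ∈ p.support, m i = 0) :
    2 ≤ (p.support.filter (fun m => m i = 0)).card := by
  by_contra hlt
  push_neg at hlt
  obtain ⟨m₀, hm₀, hm₀i⟩ := hne
  have hmem : m₀ ∈ p.support.filter (fun m => m i = 0) := Finset.mem_filter.2 ⟨hm₀, hm₀i⟩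
  have hcard1 : (p.support.filter (fun m => m i = 0)).card = 1 := by
    have := Finset.card_pos.2 ⟨m₀, hmem⟩
    omega
  obtain ⟨m, hm⟩ := Finset.card_eq_one.1 hcard1
  have hsum : ∑ d ∈ p.support, coeff d p * ∏ j, v j ^ d j = 0 := by
    rw [← eval_eq']; exact hval
  have hfil : ∑ d ∈ p.support.filter (fun m => m i = 0),
      coeff d p * ∏ j, v j ^ d j = 0 := by
    rw [← hsum]
    apply Finset.sum_filter_of_ne
    intro d _ hd0
    by_contra hdi
    apply hd0
    have : v i ^ d i = 0 := by
      rw [hvi]; exact zero_pow hdi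
    have : (∏ j, v j ^ d j) = 0 :=
      Finset.prod_eq_zero (Finset.mem_univ i) this
    rw [this, mul_zero]
  rw [hm, Finset.sum_singleton] at hfil
  have hmsupp : m ∈ p.support ∧ m i = 0 := by
    have : m ∈ p.support.filter (fun m => m i = 0) := by rw [hm]; exact Finset.mem_singleton_self m
    exact Finset.mem_filter.1 this
  have hc : coeff m p ≠ 0 := mem_support_iff.1 hmsupp.1
  have hprod : (∏ j, v j ^ m j) ≠ 0 := by
    apply Finset.prod_ne_zero_iff.2
    intro j _
    rcases eq_or_ne j i with rfl | hji
    · rw [hmsupp.2, pow_zero]; exact one_ne_zero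
    · rcases hv j hji with h1 | h1 <;> rw [h1] <;> simp
  exact (mul_ne_zero hc hprod) hfil

theorem stmt_4 (p : MvPolynomial (Fin 3) ℝ) (hp : p ≠ 0)
    (hhom : ∃ d, p.IsHomogeneous d)
    (hcard : p.support.card ≤ 3)
    (hnocommon : ¬ ∃ m : Fin 3 →₀ ℕ, m ≠ 0 ∧ ∀ s ∈ p.support, m ≤ s)
    (hvan : ∀ x y t : ℝ, x + y + t = 0 → eval ![x, y, t] p = 0) :
    ∃ c : ℝ, c ≠ 0 ∧ p = C c * (X 0 + X 1 + X 2) := by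
  classical
  obtain ⟨d, hhom⟩ := hhom
  -- each support monomial has degree d
  have hdeg : ∀ m ∈ p.support, m.degree = d := by
    intro m hm
    by_contra h
    exact mem_support_iff.1 hm (hhom.coeff_eq_zero h)
  -- nonemptiness of the zero sets
  have hne : ∀ i : Fin 3, ∃ m ∈ p.support, m i = 0 := by
    intro i
    by_contra h
    push_neg at h
    exact hnocommon ⟨Finsupp.single i 1, fun h => one_ne_zero (Finsupp.single_eq_zero.1 h),
      fun s hs => Finsupp.single_le_iff.2 (Nat.one_le_iff_ne_zero.2 (h s hs))⟩
  -- two ≤ card of each zero set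
  have key : ∀ i : Fin 3, 2 ≤ (p.support.filter (fun m => m i = 0)).card := by
    intro i
    fin_cases i
    · exact stmt_4_aux p 0 ![0, 1, -1] (by simp) (by intro j hj; fin_cases j <;> simp_all <;> norm_num) (hvan 0 1 (-1) (by ring)) (hne 0)
    · exact stmt_4_aux p 1 ![1, 0, -1] (by simp) (by intro j hj; fin_cases j <;> simp_all <;> norm_num) (hvan 1 0 (-1) (by ring)) (hne 1)
    · exact stmt_4_aux p 2 ![1, -1, 0] (by simp) (by intro j hj; fin_cases j <;> simp_all <;> norm_num) (hvan 1 (-1) 0 (by ring)) (hne 2)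
  -- each support monomial is nonzero
  have hm0 : ∀ m ∈ p.support, m ≠ 0 := by
    intro m hm hm'
    subst hm'
    have hd0 : d = 0 := by rw [← hdeg 0 hm, map_zero]
    have : p.support ⊆ {0} := by
      intro m' hm'
      have := hdeg m' hm'
      rw [hd0, Finsupp.degree_eq_zero_iff] at this
      simp [this]
    have h1 : p.support.card ≤ 1 := le_trans (Finset.card_le_card this) (by simp)
    have h2 := le_trans (key 0) (Finset.card_filter_le _ _)
    omega
  -- double counting
  have hzcount : ∀ m ∈ p.support,
      (Finset.univ.filter (fun i : Fin 3 => m i = 0)).card ≤ 2 := by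
    intro m hm
    obtain ⟨i, hi⟩ := Finsupp.ne_iff.1 (hm0 m hm)
    simp only [Finsupp.coe_zero, Pi.zero_apply] at hi
    have : (Finset.univ.filter (fun j : Fin 3 => m j = 0)) ⊆ Finset.univ.erase i := by
      intro j hj
      rw [Finset.mem_filter] at hj
      exact Finset.mem_erase.2 ⟨fun h => hi (h ▸ hj.2), Finset.mem_univ j⟩
    calc (Finset.univ.filter (fun j : Fin 3 => m j = 0)).card
        ≤ (Finset.univ.erase i).card := Finset.card_le_card this
      _ = 2 := by rw [Finset.card_erase_of_mem (Finset.mem_univ i)]; simp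
  have hdouble : ∑ i : Fin 3, (p.support.filter (fun m => m i = 0)).card
      = ∑ m ∈ p.support, (Finset.univ.filter (fun i : Fin 3 => m i = 0)).card := by
    simp only [Finset.card_filter]
    exact Finset.sum_comm
  have h6 : 6 ≤ ∑ m ∈ p.support, (Finset.univ.filter (fun i : Fin 3 => m i = 0)).card := by
    rw [← hdouble, Fin.sum_univ_three]
    have := key 0; have := key 1; have := key 2
    omega
  have hub : ∑ m ∈ p.support, (Finset.univ.filter (fun i : Fin 3 => m i = 0)).card
      ≤ 2 * p.support.card := by
    calc ∑ m ∈ p.support, (Finset.univ.filter (fun i : Fin 3 => m i = 0)).card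
        ≤ ∑ _m ∈ p.support, 2 := Finset.sum_le_sum hzcount
      _ = 2 * p.support.card := by rw [Finset.sum_const, smul_eq_mul, mul_comm]
  have hcard3 : p.support.card = 3 := by omega
  -- each monomial has exactly one nonzero coordinate
  have hz2 : ∀ m ∈ p.support, (Finset.univ.filter (fun i : Fin 3 => m i = 0)).card = 2 := by
    intro m hm
    by_contra h
    have hlt : (Finset.univ.filter (fun i : Fin 3 => m i = 0)).card < 2 :=
      lt_of_le_of_ne (hzcount m hm) h
    have : ∑ m' ∈ p.support, (Finset.univ.filter (fun i : Fin 3 => m' i = 0)).card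
        < ∑ _m' ∈ p.support, 2 :=
      Finset.sum_lt_sum (fun m' hm' => hzcount m' hm') ⟨m, hm, hlt⟩
    rw [Finset.sum_const, hcard3, smul_eq_mul] at this
    omega
  have hsingle : ∀ m ∈ p.support, ∃ i : Fin 3, m = Finsupp.single i d := by
    intro m hm
    have hsupp_eq : m.support = Finset.univ.filter (fun i : Fin 3 => m i ≠ 0) := by
      ext i; simp [Finsupp.mem_support_iff]
    have hcard_supp : m.support.card = 1 := by
      rw [hsupp_eq, Finset.filter_not, Finset.card_sdiff_of_subset (Finset.filter_subset _ _),
        hz2 m hm]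
      simp
    obtain ⟨i, hia, hma⟩ := Finsupp.card_support_eq_one.1 hcard_supp
    refine ⟨i, ?_⟩
    rw [hma]
    congr 1
    have := hdeg m hm
    rw [hma] at this
    rwa [stmt_4_degree_single] at this
  have hd0 : d ≠ 0 := by
    intro hd
    obtain ⟨m, hm⟩ := Finset.card_pos.1 (by omega : 0 < p.support.card)
    obtain ⟨i, hi⟩ := hsingle m hm
    exact hm0 m hm (by rw [hi, hd, Finsupp.single_zero])
  -- support equals the three singles
  have hsub : p.support ⊆ {Finsupp.single (0 : Fin 3) d, Finsupp.single 1 d, Finsupp.single 2 d} := by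
    intro m hm
    obtain ⟨i, hi⟩ := hsingle m hm
    fin_cases i <;> simp [hi]
  have hset_card : ({Finsupp.single (0 : Fin 3) d, Finsupp.single 1 d, Finsupp.single 2 d} :
      Finset (Fin 3 →₀ ℕ)).card ≤ 3 := by
    apply le_trans (Finset.card_insert_le _ _)
    have := Finset.card_insert_le (Finsupp.single (1 : Fin 3) d)
      ({Finsupp.single (2 : Fin 3) d} : Finset (Fin 3 →₀ ℕ))
    simp only [Finset.card_singleton] at this ⊢
    omega
  have hsupp_eq : p.support = {Finsupp.single (0 : Fin 3) d, Finsupp.single 1 d,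
      Finsupp.single 2 d} := by
    apply Finset.eq_of_subset_of_card_le hsub
    omega
  -- the three coefficients
  set a := coeff (Finsupp.single (0 : Fin 3) d) p with ha
  set b := coeff (Finsupp.single (1 : Fin 3) d) p with hb
  set c := coeff (Finsupp.single (2 : Fin 3) d) p with hc
  have hane : a ≠ 0 := by
    rw [ha, ← mem_support_iff, hsupp_eq]; simp
  have hbne : b ≠ 0 := by
    rw [hb, ← mem_support_iff, hsupp_eq]; simp
  have hcne : c ≠ 0 := by
    rw [hc, ← mem_support_iff, hsupp_eq]; simp
  have hne01 : Finsupp.single (0 : Fin 3) d ≠ Finsupp.single 1 d := by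
    intro h
    rcases (Finsupp.single_eq_single_iff _ _ _ _).1 h with ⟨h', _⟩ | ⟨h', _⟩
    · exact absurd h' (by decide)
    · exact hd0 h'
  have hne02 : Finsupp.single (0 : Fin 3) d ≠ Finsupp.single 2 d := by
    intro h
    rcases (Finsupp.single_eq_single_iff _ _ _ _).1 h with ⟨h', _⟩ | ⟨h', _⟩
    · exact absurd h' (by decide)
    · exact hd0 h'
  have hne12 : Finsupp.single (1 : Fin 3) d ≠ Finsupp.single 2 d := by
    intro h
    rcases (Finsupp.single_eq_single_iff _ _ _ _).1 h with ⟨h', _⟩ | ⟨h', _⟩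
    · exact absurd h' (by decide)
    · exact hd0 h'
  -- evaluation formula
  have heval : ∀ x y t : ℝ, eval ![x, y, t] p = a * x ^ d + b * y ^ d + c * t ^ d := by
    intro x y t
    rw [eval_eq', hsupp_eq]
    rw [Finset.sum_insert (by simp [hne01, hne02]),
      Finset.sum_insert (by simp [hne12]), Finset.sum_singleton, ← ha, ← hb, ← hc]
    simp only [Fin.prod_univ_three, Finsupp.single_apply]
    norm_num [Fin.ext_iff]
    rw [show ![x, y, t] 2 = t from rfl]
    ring
  have h0d : (0 : ℝ) ^ d = 0 := zero_pow hd0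
  have E1 : a + b * (-1 : ℝ) ^ d = 0 := by
    have := hvan 1 (-1) 0 (by ring)
    rw [heval, h0d, one_pow] at this
    linarith [this]
  have E2 : a + c * (-1 : ℝ) ^ d = 0 := by
    have := hvan 1 0 (-1) (by ring)
    rw [heval, h0d, one_pow] at this
    linarith [this]
  have E3 : b + c * (-1 : ℝ) ^ d = 0 := by
    have := hvan 0 1 (-1) (by ring)
    rw [heval, h0d, one_pow] at this
    linarith [this]
  have E4 : a + b + c * (-2 : ℝ) ^ d = 0 := by
    have := hvan 1 1 (-2) (by ring)
    rw [heval, one_pow] at this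
    linarith [this]
  -- determine the sign
  have hsign : (-1 : ℝ) ^ d = -1 := by
    rcases Nat.even_or_odd d with he | ho
    · exfalso
      rw [he.neg_one_pow] at E1 E2 E3
      -- a + b = 0, a + c = 0, b + c = 0 => a = 0
      have : a = 0 := by linarith
      exact hane this
    · exact ho.neg_one_pow
  rw [hsign] at E1 E2 E3
  have hba : b = a := by linarith
  have hca : c = a := by linarith
  -- determine d = 1
  have hdodd : Odd d := by
    rcases Nat.even_or_odd d with he | ho
    · exfalso; rw [he.neg_one_pow] at hsign; norm_num at hsign
    · exact ho
  have hpow2 : (2 : ℝ) ^ d = 2 := by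
    have h2 : (-2 : ℝ) ^ d = -(2 ^ d) := by
      rw [show (-2 : ℝ) = -1 * 2 by norm_num, mul_pow, hsign]
      ring
    rw [h2, hba, hca] at E4
    have : a * (2 - 2 ^ d) = 0 := by ring_nf; ring_nf at E4; linarith
    rcases mul_eq_zero.1 this with h | h
    · exact absurd h hane
    · linarith
  have hd1 : d = 1 := by
    by_contra hd1
    have h2le : 2 ≤ d := by omega
    have : (2 : ℝ) ^ 2 ≤ 2 ^ d := pow_le_pow_right₀ (by norm_num) h2le
    rw [hpow2] at this
    norm_num at this
  -- conclude
  refine ⟨a, hane, ?_⟩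
  rw [as_sum p, hsupp_eq]
  rw [Finset.sum_insert (by simp [hne01, hne02]),
    Finset.sum_insert (by simp [hne12]), Finset.sum_singleton]
  rw [← ha, ← hb, ← hc, hba, hca, hd1]
  rw [mul_add, mul_add, C_mul_X_eq_monomial, C_mul_X_eq_monomial, C_mul_X_eq_monomial, add_assoc]
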